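/- Let σ: ℝ → ℝ be continuous and let x, y ∈ ℝ with x ≠ 0 and y ≠ 0. Define E(v, w, b) = (y − v·σ(wx + b))². Suppose that for every t ∈ ℝ with σ(t) = 0, t is neither a local maximum nor a local minimum of σ. Then every local minimum of E is a global minimum (i.e., achieves E = 0, provided σ is not identically zero). -/

import Mathlib

/-- If σ is continuous and no zero of σ is a local max or local min of σ, then
the single-neuron loss E(v,w,b) = (y − v·σ(wx+b))² has no sub-optimal local
minima: every local minimum achieves zero loss. -/
theorem single_neuron_no_bad_local_min (σ : ℝ → ℝ) (hσ : Continuous σ)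
    (x y : ℝ) (hx : x ≠ 0) (hy : y ≠ 0)
    (hzero : ∀ t, σ t = 0 → ¬ IsLocalMax σ t ∧ ¬ IsLocalMin σ t) :
    ∀ θ : ℝ × ℝ × ℝ,
      IsLocalMin (fun θ : ℝ × ℝ × ℝ =>
        (y - θ.1 * σ (θ.2.1 * x + θ.2.2)) ^ 2) θ →
      (y - θ.1 * σ (θ.2.1 * x + θ.2.2)) ^ 2 = 0 := by
  rintro ⟨v, w, b⟩ hmin
  obtain ⟨δ, hδ, H⟩ := Metric.eventually_nhds_iff.mp hmin
  simp only at H ⊢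
  set t₀ := w * x + b with ht₀
  by_cases hs : σ t₀ = 0
  · exfalso
    obtain ⟨hnmax, hnmin⟩ := hzero t₀ hs
    set v' : ℝ := if v = 0 then δ / 2 else v with hv'def
    have hv' : v' ≠ 0 := by
      rw [hv'def]; split
      · positivity
      · assumption
    have hv'd : |v' - v| < δ := by
      rw [hv'def]; split
      · next h => rw [h, sub_zero, abs_of_pos (by positivity)]; linarith
      · simp [hδ]
    have hM : 0 < |y| / |v'| := div_pos (abs_pos.mpr hy) (abs_pos.mpr hv')
    have hev : ∀ᶠ t in nhds t₀, |t - t₀| < δ / 2 ∧ |σ t| < |y| / |v'| := by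
      apply (eventually_abs_sub_lt t₀ (by positivity)).and
      have := Metric.tendsto_nhds.mp (hσ.tendsto t₀) _ hM
      filter_upwards [this] with t ht
      rwa [Real.dist_eq, hs, sub_zero] at ht
    have hvy : y * v' ≠ 0 := mul_ne_zero hy hv'
    have hex : ∃ t, |t - t₀| < δ / 2 ∧ |σ t| < |y| / |v'| ∧ 0 < v' * σ t * y := by
      rcases hvy.lt_or_gt with hyv | hyv
      · have hF : ∃ᶠ t in nhds t₀, σ t < 0 := by
          have := Filter.not_eventually.mp hnmin
          apply this.mono
          intro t ht
          rw [hs] at ht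
          exact lt_of_not_ge ht
        obtain ⟨t, hts, ht1, ht2⟩ := (hF.and_eventually hev).exists
        exact ⟨t, ht1, ht2, by nlinarith⟩
      · have hF : ∃ᶠ t in nhds t₀, 0 < σ t := by
          have := Filter.not_eventually.mp hnmax
          apply this.mono
          intro t ht
          rw [hs] at ht
          exact lt_of_not_ge ht
        obtain ⟨t, hts, ht1, ht2⟩ := (hF.and_eventually hev).exists
        exact ⟨t, ht1, ht2, by nlinarith⟩
    obtain ⟨t, ht1, ht2, ht3⟩ := hex
    set u : ℝ := v' * σ t with hu
    have hdist : dist ((v', w, b + (t - t₀)) : ℝ × ℝ × ℝ) (v, w, b) < δ := by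
      rw [Prod.dist_eq, Prod.dist_eq]
      simp only [Real.dist_eq, dist_self]
      have : b + (t - t₀) - b = t - t₀ := by ring
      rw [this]
      apply max_lt hv'd
      apply max_lt hδ
      linarith [ht1]
    have key := H hdist
    have harg : w * x + (b + (t - t₀)) = t := by rw [ht₀]; ring
    rw [harg, hs] at key
    have key2 : y ^ 2 ≤ (y - u) ^ 2 := by
      have : y ^ 2 ≤ (y - v' * σ t) ^ 2 := by simpa using key
      rwa [← hu] at this
    have huy : 0 < u * y := ht3
    have hune : u ≠ 0 := by
      rintro h0
      rw [h0, zero_mul] at ht3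
      exact lt_irrefl 0 ht3
    have habs : |u| < |y| := by
      rw [hu, abs_mul]
      calc |v'| * |σ t| < |v'| * (|y| / |v'|) :=
            mul_lt_mul_of_pos_left ht2 (abs_pos.mpr hv')
        _ = |y| := by field_simp
    have hupos : 0 < |u| := abs_pos.mpr hune
    have hu2 : u ^ 2 < u * y := by
      have h1 : |u| * |u| < |u| * |y| := mul_lt_mul_of_pos_left habs hupos
      have h2 : u * y = |u| * |y| := by rw [← abs_mul, abs_of_pos huy]
      nlinarith [abs_mul_abs_self u]
    nlinarith [key2, hu2, huy]
  · -- σ t₀ ≠ 0 : show the residual is zero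
    by_contra hne
    have hr : y - v * σ t₀ ≠ 0 := fun h => hne (by rw [h]; ring)
    set s := σ t₀ with hsdef
    set r := y - v * s with hrdef
    have hrpos : 0 < r ^ 2 := by positivity
    set m : ℝ := min (1 / 2) (δ * |s| / (2 * |r|)) with hm
    have hm0 : 0 < m := by
      apply lt_min (by norm_num)
      positivity
    have hm1 : m ≤ 1 / 2 := min_le_left _ _
    set h : ℝ := r / s * m with hh
    have hhd : |h| < δ := by
      rw [hh, abs_mul, abs_div]
      have h1 : m ≤ δ * |s| / (2 * |r|) := min_le_right _ _
      have habs_m : |m| = m := abs_of_pos hm0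
      rw [habs_m]
      have hs' : 0 < |s| := abs_pos.mpr hs
      have hr' : 0 < |r| := abs_pos.mpr hr
      rw [div_mul_eq_mul_div, div_lt_iff₀ hs']
      calc |r| * m ≤ |r| * (δ * |s| / (2 * |r|)) := by
            exact mul_le_mul_of_nonneg_left h1 (le_of_lt hr')
        _ = δ * |s| / 2 := by field_simp
        _ < δ * |s| := by linarith [mul_pos hδ hs']
    have hdist : dist ((v + h, w, b) : ℝ × ℝ × ℝ) (v, w, b) < δ := by
      rw [Prod.dist_eq, Prod.dist_eq]
      simp only [Real.dist_eq, dist_self]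
      have : v + h - v = h := by ring
      rw [this]
      exact max_lt hhd (by simp [hδ])
    have key := H hdist
    simp only at key
    rw [← ht₀, ← hsdef] at key
    have hcomp : y - (v + h) * s = r - r * m := by
      rw [hh, hrdef]; field_simp; ring
    rw [hcomp] at key
    -- key : (y - v * s)^2 ≤ (r - r*m)^2
    have key2 : r ^ 2 ≤ (r - r * m) ^ 2 := by rw [hrdef] at key ⊢; exact key
    nlinarith [mul_pos (mul_pos hrpos hm0) (show (0:ℝ) < 2 - m by linarith)]
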